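/- Let (G,σ) be a simple signed graph with a unique Sachs subgraph S. Then (G,σ) has an integral inverse (all entries of A⁻¹ are integers) if and only if S is a perfect matching. -/

import Mathlib

open scoped Classical

/-- Degree of a vertex in a simple graph (as a cardinality, avoiding decidability). -/
noncomputable def sachsDeg {n : ℕ} (H : SimpleGraph (Fin n)) (v : Fin n) : ℕ :=
  Nat.card {w // H.Adj v w}

/-- `H` is a Sachs subgraph of the simple graph `G`: a spanning subgraph all of whose
components are `K₂`'s or cycles. -/
def IsSachsSubgraph {n : ℕ} (G H : SimpleGraph (Fin n)) : Prop :=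
  H ≤ G ∧ (∀ v, sachsDeg H v = 1 ∨ sachsDeg H v = 2) ∧
    ∀ u v, H.Adj u v → ¬(sachsDeg H u = 1 ∧ sachsDeg H v = 2)

@[simp] theorem Equiv.Perm.apply_inv_self {α : Type*} (e : Equiv.Perm α) (x : α) : e (e⁻¹ x) = x :=
  e.apply_symm_apply x

@[simp] theorem Equiv.Perm.inv_apply_self {α : Type*} (e : Equiv.Perm α) (x : α) : e⁻¹ (e x) = x :=
  e.symm_apply_apply x

namespace SachsAux

variable {n : ℕ}

lemma sachsDeg_eq_ncard (H : SimpleGraph (Fin n)) (v : Fin n) :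
    sachsDeg H v = Set.ncard {w | H.Adj v w} := by
  rw [sachsDeg, ← Nat.card_coe_set_eq]; rfl

/-- the graph of a fixed-point-free permutation -/
def permGraph (π : Equiv.Perm (Fin n)) (hπ : ∀ i, π i ≠ i) : SimpleGraph (Fin n) where
  Adj i j := j = π i ∨ i = π j
  symm := ⟨fun i j h => h.symm⟩
  loopless := ⟨fun i h => by rcases h with h | h <;> exact hπ i h.symm⟩

lemma nbhd_of_hadj {S : SimpleGraph (Fin n)} {π : Equiv.Perm (Fin n)}
    (hadj : ∀ i j, S.Adj i j ↔ (j = π i ∨ i = π j)) (v : Fin n) :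
    {w | S.Adj v w} = {π v, π⁻¹ v} := by
  ext w
  simp only [Set.mem_setOf_eq, hadj, Set.mem_insert_iff, Set.mem_singleton_iff]
  constructor
  · rintro (h | h)
    · exact Or.inl h
    · right; rw [h, Equiv.Perm.inv_apply_self]
  · rintro (h | h)
    · exact Or.inl h
    · right; rw [h, Equiv.Perm.apply_inv_self]

lemma sachsDeg_of_hadj {S : SimpleGraph (Fin n)} {π : Equiv.Perm (Fin n)}
    (hadj : ∀ i j, S.Adj i j ↔ (j = π i ∨ i = π j)) (v : Fin n) :
    sachsDeg S v = if π v = π⁻¹ v then 1 else 2 := by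
  rw [sachsDeg_eq_ncard, nbhd_of_hadj hadj]
  split_ifs with h
  · rw [h, Set.pair_eq_singleton, Set.ncard_singleton]
  · exact Set.ncard_pair h

lemma permGraph_isSachs (G : SimpleGraph (Fin n)) (π : Equiv.Perm (Fin n))
    (h : ∀ i, G.Adj i (π i)) :
    IsSachsSubgraph G (permGraph π (fun i => (h i).ne')) := by
  have hπ : ∀ i, π i ≠ i := fun i => (h i).ne'
  have hadj : ∀ i j, (permGraph π hπ).Adj i j ↔ (j = π i ∨ i = π j) := fun _ _ => Iff.rfl
  refine ⟨?_, ?_, ?_⟩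
  · intro i j hij
    rcases hij with h1 | h1
    · rw [h1]; exact h i
    · rw [h1]; exact (h j).symm
  · intro v
    rw [sachsDeg_of_hadj hadj]
    split_ifs
    · exact Or.inl rfl
    · exact Or.inr rfl
  · intro u v huv hc
    obtain ⟨h1, h2⟩ := hc
    rw [sachsDeg_of_hadj hadj] at h1 h2
    have e1 : π u = π⁻¹ u := by by_contra hc'; rw [if_neg hc'] at h1; omega
    have e2 : π v ≠ π⁻¹ v := by intro hc'; rw [if_pos hc'] at h2; omega
    have hv : v = π u := by
      rcases huv with h3 | h3
      · exact h3
      · rw [e1, h3, Equiv.Perm.inv_apply_self]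
    apply e2
    rw [hv]
    conv_lhs => rw [e1]
    rw [Equiv.Perm.apply_inv_self, Equiv.Perm.inv_apply_self]

lemma term_eq {S : SimpleGraph (Fin n)} {σ : Fin n → Fin n → ℝ}
    (hσsymm : ∀ i j, σ i j = σ j i)
    {π π' : Equiv.Perm (Fin n)}
    (hadj : ∀ i j, S.Adj i j ↔ (j = π i ∨ i = π j))
    (hadj' : ∀ i j, S.Adj i j ↔ (j = π' i ∨ i = π' j)) :
    ((Equiv.Perm.sign π' : ℤ) : ℝ) * ∏ i, σ (π' i) i
      = ((Equiv.Perm.sign π : ℤ) : ℝ) * ∏ i, σ (π i) i := by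
  have dich : ∀ x, π' x = π x ∨ π' x = π⁻¹ x := by
    intro x
    have h1 : S.Adj x (π' x) := (hadj' x _).2 (Or.inl rfl)
    rcases (hadj x (π' x)).1 h1 with h | h
    · exact Or.inl h
    · right
      apply π.injective
      rw [π.apply_inv_self]
      exact h.symm
  have fstep : ∀ x, π' x = π x → π' (π x) = π (π x) := by
    intro x hx
    rcases dich (π x) with h | h
    · exact h
    · have h2 : π' (π x) = x := by rw [h, Equiv.Perm.inv_apply_self]
      have h5 : π (π x) = x := by
        have h4 : S.Adj x (π⁻¹ x) := (hadj x _).2 (Or.inr (π.apply_inv_self x).symm)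
        rcases (hadj' x (π⁻¹ x)).1 h4 with h6 | h6
        · have h7 : π x = π⁻¹ x := by rw [← hx, ← h6]
          rw [h7, π.apply_inv_self]
        · have h7 : π⁻¹ x = π x := π'.injective (by rw [← h6, h2])
          rw [← h7, π.apply_inv_self]
      rw [h2, h5]
  classical
  set Afin : Finset (Fin n) := Finset.univ.filter (fun x => π' x = π x) with hAdef
  have memA : ∀ x, x ∈ Afin ↔ π' x = π x := by
    intro x; simp [hAdef]
  have hmaps : ∀ x ∈ Afin, π x ∈ Afin := fun x hx => (memA _).2 (fstep x ((memA x).1 hx))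
  have himg : Afin.image π = Afin := by
    apply Finset.eq_of_subset_of_card_le
    · intro y hy
      obtain ⟨x, hx, rfl⟩ := Finset.mem_image.1 hy
      exact hmaps x hx
    · rw [Finset.card_image_of_injective _ π.injective]
  have invmem : ∀ x, π x ∈ Afin ↔ x ∈ Afin := by
    intro x
    constructor
    · intro hx
      rw [← himg] at hx
      obtain ⟨y, hy, hyx⟩ := Finset.mem_image.1 hx
      rwa [← π.injective hyx]
    · exact hmaps x
  have invmem' : ∀ x, π⁻¹ x ∈ Afin ↔ x ∈ Afin := by
    intro x
    rw [← invmem (π⁻¹ x), π.apply_inv_self]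
  have notA : ∀ x, x ∉ Afin → π' x = π⁻¹ x := by
    intro x hx
    rcases dich x with h | h
    · exact absurd ((memA x).2 h) hx
    · exact h
  -- the square root permutation
  let ρ : Equiv.Perm (Fin n) :=
    { toFun := fun x => if x ∈ Afin then x else π x
      invFun := fun x => if x ∈ Afin then x else π⁻¹ x
      left_inv := by
        intro x
        by_cases hx : x ∈ Afin
        · simp [hx]
        · have h2 : π x ∉ Afin := fun h => hx ((invmem x).1 h)
          simp [hx, h2]
      right_inv := by
        intro x
        by_cases hx : x ∈ Afin
        · simp [hx]
        · have h2 : π.symm x ∉ Afin := fun h => hx ((invmem' x).1 h)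
          simp [hx, h2] }
  have hρ : ∀ x, ρ x = if x ∈ Afin then x else π x := fun x => rfl
  have hρsq : π'⁻¹ * π = ρ * ρ := by
    apply Equiv.ext
    intro x
    simp only [Equiv.Perm.mul_apply]
    by_cases hx : x ∈ Afin
    · have e : ρ x = x := by rw [hρ x, if_pos hx]
      rw [e, e, ← (memA x).1 hx, Equiv.Perm.inv_apply_self]
    · have h2 : π x ∉ Afin := fun h => hx ((invmem x).1 h)
      have h3 : π (π x) ∉ Afin := fun h => h2 ((invmem (π x)).1 h)
      have e : ρ x = π x := by rw [hρ x, if_neg hx]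
      have e2 : ρ (π x) = π (π x) := by rw [hρ (π x), if_neg h2]
      rw [e, e2]
      have h4 : π' (π (π x)) = π x := by
        rw [notA _ h3, Equiv.Perm.inv_apply_self]
      exact π'.injective (by rw [Equiv.Perm.apply_inv_self, h4])
  have hsign : Equiv.Perm.sign π' = Equiv.Perm.sign π := by
    have h1 : Equiv.Perm.sign (π'⁻¹ * π) = 1 := by
      rw [hρsq, map_mul]
      exact Int.units_mul_self _
    rw [map_mul, Equiv.Perm.sign_inv] at h1
    calc Equiv.Perm.sign π' = Equiv.Perm.sign π' * (Equiv.Perm.sign π * Equiv.Perm.sign π) := by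
          rw [Int.units_mul_self, mul_one]
      _ = (Equiv.Perm.sign π' * Equiv.Perm.sign π) * Equiv.Perm.sign π := by rw [mul_assoc]
      _ = Equiv.Perm.sign π := by rw [h1, one_mul]
  have hprod : ∏ i, σ (π' i) i = ∏ i, σ (π i) i := by
    rw [← Finset.prod_filter_mul_prod_filter_not Finset.univ (fun x => x ∈ Afin)
      (fun i => σ (π' i) i),
      ← Finset.prod_filter_mul_prod_filter_not Finset.univ (fun x => x ∈ Afin)
      (fun i => σ (π i) i)]
    congr 1
    · apply Finset.prod_congr rfl
      intro x hx
      rw [(memA x).1 (Finset.mem_filter.1 hx).2]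
    · have hstep : ∏ x ∈ Finset.univ.filter (fun x => ¬x ∈ Afin), σ (π' x) x
          = ∏ x ∈ Finset.univ.filter (fun x => ¬x ∈ Afin), σ (π⁻¹ x) x :=
        Finset.prod_congr rfl (fun x hx => by rw [notA x (Finset.mem_filter.1 hx).2])
      rw [hstep]
      apply Finset.prod_nbij' (fun x => π⁻¹ x) (fun x => π x)
      · intro a ha
        simp only [Finset.mem_filter, Finset.mem_univ, true_and] at ha ⊢
        exact fun h => ha ((invmem' a).1 h)
      · intro a ha
        simp only [Finset.mem_filter, Finset.mem_univ, true_and] at ha ⊢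
        exact fun h => ha ((invmem a).1 h)
      · intro a _; exact π.apply_inv_self a
      · intro a _; exact π.inv_apply_self a
      · intro a _
        rw [π.apply_inv_self]
        exact hσsymm _ _
  rw [hsign, hprod]

lemma sachsDeg_eq_degree (S : SimpleGraph (Fin n)) (v : Fin n) :
    sachsDeg S v = S.degree v := by
  rw [sachsDeg_eq_ncard]
  have h : {w | S.Adj v w} = S.neighborSet v := rfl
  rw [h, Set.ncard_eq_toFinset_card', Set.toFinset_card,
    SimpleGraph.card_neighborSet_eq_degree]

lemma exists_orientation {G S : SimpleGraph (Fin n)} (hS : IsSachsSubgraph G S) :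
    ∃ π : Equiv.Perm (Fin n), ∀ i, S.Adj i (π i) := by
  classical
  have hdeg12 : ∀ v, S.degree v = 1 ∨ S.degree v = 2 := fun v => by
    rw [← sachsDeg_eq_degree]; exact hS.2.1 v
  have hedge : ∀ u v, S.Adj u v → S.degree u = S.degree v := by
    intro u v huv
    rcases hdeg12 u with h1 | h1 <;> rcases hdeg12 v with h2 | h2 <;> try rw [h1, h2]
    · exact absurd ⟨by rw [sachsDeg_eq_degree]; exact h1,
        by rw [sachsDeg_eq_degree]; exact h2⟩ (hS.2.2 u v huv)
    · exact absurd ⟨by rw [sachsDeg_eq_degree]; exact h2,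
        by rw [sachsDeg_eq_degree]; exact h1⟩ (hS.2.2 v u huv.symm)
  have hcond : ∀ s : Finset (Fin n), s.card ≤ (s.biUnion (fun v => S.neighborFinset v)).card := by
    intro s
    set T := s.biUnion (fun v => S.neighborFinset v) with hT
    have key1 : (s.card : ℚ) = ∑ v ∈ s, ∑ u ∈ S.neighborFinset v, (S.degree u : ℚ)⁻¹ := by
      rw [Finset.card_eq_sum_ones s]
      push_cast
      apply Finset.sum_congr rfl
      intro v hv
      have h1 : ∀ u ∈ S.neighborFinset v, (S.degree u : ℚ)⁻¹ = (S.degree v : ℚ)⁻¹ := by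
        intro u hu
        rw [SimpleGraph.mem_neighborFinset] at hu
        rw [hedge v u hu]
      rw [Finset.sum_congr rfl h1, Finset.sum_const, SimpleGraph.card_neighborFinset_eq_degree]
      have h2 : (S.degree v : ℚ) ≠ 0 := by
        rcases hdeg12 v with h | h <;> rw [h] <;> norm_num
      rw [nsmul_eq_mul, mul_inv_cancel₀ h2]
    have key2 : ∑ v ∈ s, ∑ u ∈ S.neighborFinset v, (S.degree u : ℚ)⁻¹
        = ∑ u ∈ T, ∑ v ∈ s.filter (fun v => S.Adj u v), (S.degree u : ℚ)⁻¹ := by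
      apply Finset.sum_comm'
      intro x y
      simp only [SimpleGraph.mem_neighborFinset, Finset.mem_filter, hT, Finset.mem_biUnion]
      constructor
      · rintro ⟨hx, hxy⟩
        exact ⟨⟨hx, hxy.symm⟩, ⟨x, hx, hxy⟩⟩
      · rintro ⟨⟨hx, hyx⟩, _⟩
        exact ⟨hx, hyx.symm⟩
    have key3 : ∑ u ∈ T, ∑ v ∈ s.filter (fun v => S.Adj u v), (S.degree u : ℚ)⁻¹
        ≤ (T.card : ℚ) := by
      rw [Finset.card_eq_sum_ones T]
      push_cast
      apply Finset.sum_le_sum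
      intro u _
      rw [Finset.sum_const, nsmul_eq_mul]
      have h1 : (s.filter (fun v => S.Adj u v)).card ≤ S.degree u := by
        rw [← SimpleGraph.card_neighborFinset_eq_degree]
        apply Finset.card_le_card
        intro v hv
        rw [SimpleGraph.mem_neighborFinset]
        exact (Finset.mem_filter.1 hv).2
      have h2 : (0 : ℚ) < (S.degree u : ℚ) := by
        rcases hdeg12 u with h | h <;> rw [h] <;> norm_num
      calc ((s.filter (fun v => S.Adj u v)).card : ℚ) * (S.degree u : ℚ)⁻¹
          ≤ (S.degree u : ℚ) * (S.degree u : ℚ)⁻¹ := by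
            apply mul_le_mul_of_nonneg_right _ (by positivity)
            exact_mod_cast h1
        _ = 1 := mul_inv_cancel₀ (ne_of_gt h2)
    have := key1 ▸ key2 ▸ key3
    exact_mod_cast this
  obtain ⟨f, hfinj, hfmem⟩ :=
    (Finset.all_card_le_biUnion_card_iff_exists_injective (fun v => S.neighborFinset v)).1 hcond
  refine ⟨Equiv.ofBijective f ((Finite.injective_iff_bijective).1 hfinj), fun i => ?_⟩
  have := hfmem i
  rw [SimpleGraph.mem_neighborFinset] at this
  exact this

end SachsAux

/-- Let `(G,σ)` be a simple signed graph with a unique Sachs subgraph `S`.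
Then `(G,σ)` has an integral inverse (all entries of `A⁻¹` are integers) if and only if
`S` is a perfect matching (every vertex has degree `1` in `S`). -/
theorem integral_inverse_iff_unique_sachs_is_perfect_matching
    {n : ℕ} (G : SimpleGraph (Fin n))
    (σ : Fin n → Fin n → ℝ) (hσsymm : ∀ i j, σ i j = σ j i)
    (hσval : ∀ i j, G.Adj i j → σ i j = 1 ∨ σ i j = -1)
    (A : Matrix (Fin n) (Fin n) ℝ)
    (hAdef : A = Matrix.of fun i j => if G.Adj i j then σ i j else 0)
    (S : SimpleGraph (Fin n)) (hS : IsSachsSubgraph G S)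
    (huniq : ∀ S' : SimpleGraph (Fin n), IsSachsSubgraph G S' → S' = S) :
    (∀ i j, ∃ z : ℤ, A⁻¹ i j = (z : ℝ)) ↔ ∀ v, sachsDeg S v = 1 := by
  classical
  have hA : ∀ i j, A i j = if G.Adj i j then σ i j else 0 := fun i j => by rw [hAdef]; rfl
  -- the integer matrix underlying A
  set B : Matrix (Fin n) (Fin n) ℤ :=
    Matrix.of (fun i j => if G.Adj i j then (if σ i j = 1 then (1 : ℤ) else -1) else 0) with hB
  have hBa : ∀ i j, B i j = if G.Adj i j then (if σ i j = 1 then (1 : ℤ) else -1) else 0 :=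
    fun i j => by rw [hB]; rfl
  have hAB : A = B.map (Int.cast : ℤ → ℝ) := by
    ext i j
    rw [Matrix.map_apply, hA i j, hBa i j]
    by_cases h : G.Adj i j
    · rw [if_pos h, if_pos h]
      rcases hσval i j h with h1 | h1
      · rw [if_pos h1, h1]; norm_num
      · rw [if_neg (by rw [h1]; norm_num), h1]; norm_num
    · rw [if_neg h, if_neg h]; norm_num
  have hdetAB : A.det = ((B.det : ℤ) : ℝ) := by
    rw [hAB]
    exact ((Int.castRingHom ℝ).map_det B).symm
  -- permutations compatible with G
  set Pfin := Finset.univ.filter (fun π : Equiv.Perm (Fin n) => ∀ i, G.Adj i (π i)) with hPdef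
  have memP : ∀ π : Equiv.Perm (Fin n), π ∈ Pfin ↔ ∀ i, G.Adj i (π i) := fun π => by
    simp [hPdef]
  have key : ∀ π : Equiv.Perm (Fin n), (∀ i, G.Adj i (π i)) →
      ∀ i j, S.Adj i j ↔ (j = π i ∨ i = π j) := by
    intro π hπ i j
    have h := huniq _ (SachsAux.permGraph_isSachs G π hπ)
    rw [← h]
    exact Iff.rfl
  have hdet : A.det = ∑ π ∈ Pfin, ((Equiv.Perm.sign π : ℤ) : ℝ) * ∏ i, σ (π i) i := by
    rw [Matrix.det_apply, ← Finset.sum_subset (Finset.subset_univ Pfin)]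
    · apply Finset.sum_congr rfl
      intro π hπ
      have hπ' := (memP π).1 hπ
      have hAπ : ∀ i, A (π i) i = σ (π i) i := fun i => by
        rw [hA, if_pos (hπ' i).symm]
      rw [Finset.prod_congr rfl (fun i _ => hAπ i), Units.smul_def, zsmul_eq_mul]
    · intro π _ hπ
      obtain ⟨i, hi⟩ := not_forall.1 (fun h => hπ ((memP π).2 h))
      have h0 : A (π i) i = 0 := by
        rw [hA, if_neg (fun h => hi h.symm)]
      have hz : ∏ i : Fin n, A (π i) i = 0 := Finset.prod_eq_zero (Finset.mem_univ i) h0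
      rw [hz, smul_zero]
  constructor
  · -- integral inverse → perfect matching
    intro hint
    by_contra hpm
    push_neg at hpm
    obtain ⟨v, hv⟩ := hpm
    have hv2 : sachsDeg S v = 2 := (hS.2.1 v).resolve_left hv
    obtain ⟨π₀, hπ₀⟩ := SachsAux.exists_orientation hS
    have hπ₀G : ∀ i, G.Adj i (π₀ i) := fun i => hS.1 (hπ₀ i)
    have hπ₀P : π₀ ∈ Pfin := (memP π₀).2 hπ₀G
    set c : ℝ := ((Equiv.Perm.sign π₀ : ℤ) : ℝ) * ∏ i, σ (π₀ i) i with hc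
    have hterm : ∀ π ∈ Pfin, ((Equiv.Perm.sign π : ℤ) : ℝ) * ∏ i, σ (π i) i = c :=
      fun π hπ => SachsAux.term_eq hσsymm (key π₀ hπ₀G) (key π ((memP π).1 hπ))
    have hdetc : A.det = (Pfin.card : ℝ) * c := by
      rw [hdet, Finset.sum_congr rfl hterm, Finset.sum_const, nsmul_eq_mul]
    -- c * c = 1
    have hprodpm : (∏ i, σ (π₀ i) i) * (∏ i, σ (π₀ i) i) = 1 := by
      rw [← Finset.prod_mul_distrib]
      apply Finset.prod_eq_one
      intro i _
      rcases hσval (π₀ i) i (hπ₀G i).symm with h | h <;> rw [h] <;> norm_num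
    have hss : ((Equiv.Perm.sign π₀ : ℤ) : ℝ) * ((Equiv.Perm.sign π₀ : ℤ) : ℝ) = 1 := by
      rcases Int.units_eq_one_or (Equiv.Perm.sign π₀) with h | h <;> rw [h] <;> norm_num
    have hcc : c * c = 1 := by
      calc c * c = (((Equiv.Perm.sign π₀ : ℤ) : ℝ) * ((Equiv.Perm.sign π₀ : ℤ) : ℝ))
            * ((∏ i, σ (π₀ i) i) * (∏ i, σ (π₀ i) i)) := by rw [hc]; ring
        _ = 1 := by rw [hss, hprodpm, one_mul]
    -- Pfin has even cardinality
    have hvne : ∀ π : Equiv.Perm (Fin n), (∀ i, G.Adj i (π i)) → π v ≠ π⁻¹ v := by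
      intro π hπ hcontra
      rw [SachsAux.sachsDeg_of_hadj (key π hπ) v, if_pos hcontra] at hv2
      omega
    have hsum : ∑ _π ∈ Pfin, (1 : ZMod 2) = 0 := by
      apply Finset.sum_involution (g := fun π _ => π⁻¹)
      · intro a _; decide
      · intro π hπ _ heq
        exact hvne π ((memP π).1 hπ) (by rw [heq])
      · intro π hπ; exact inv_inv π
      · intro π hπ
        refine (memP _).2 (fun i => ?_)
        have h2 := ((memP π).1 hπ) (π⁻¹ i)
        rw [Equiv.Perm.apply_inv_self] at h2
        exact h2.symm
    have heven : 2 ∣ Pfin.card := by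
      rw [Finset.sum_const, nsmul_eq_mul, mul_one] at hsum
      exact (ZMod.natCast_eq_zero_iff _ 2).1 hsum
    -- A is invertible with integer det and integer inverse det
    have hc0 : c ≠ 0 := fun h => by rw [h, mul_zero] at hcc; norm_num at hcc
    have hcard0 : Pfin.card ≠ 0 := Finset.card_ne_zero_of_mem hπ₀P
    have hdet0 : A.det ≠ 0 := by
      rw [hdetc]
      exact mul_ne_zero (Nat.cast_ne_zero.2 hcard0) hc0
    set C : Matrix (Fin n) (Fin n) ℤ := Matrix.of (fun i j => (hint i j).choose) with hC
    have hAC : A⁻¹ = C.map (Int.cast : ℤ → ℝ) := by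
      ext i j
      rw [Matrix.map_apply]
      exact (hint i j).choose_spec
    have hdetAC : A⁻¹.det = ((C.det : ℤ) : ℝ) := by
      rw [hAC]
      exact ((Int.castRingHom ℝ).map_det C).symm
    have hACone : A * A⁻¹ = 1 := Matrix.mul_nonsing_inv A (isUnit_iff_ne_zero.2 hdet0)
    have hdet1 : A.det * A⁻¹.det = 1 := by rw [← Matrix.det_mul, hACone, Matrix.det_one]
    have hBC : B.det * C.det = 1 := by
      have : ((B.det * C.det : ℤ) : ℝ) = 1 := by
        rw [Int.cast_mul]
        rw [← hdetAB, ← hdetAC]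
        exact hdet1
      exact_mod_cast this
    have hBunit : B.det = 1 ∨ B.det = -1 := Int.isUnit_iff.1 (IsUnit.of_mul_eq_one _ hBC)
    -- so |det A| = 1 but det A = card * (±1) with card even
    have hsq : ((Pfin.card : ℝ)) ^ 2 = 1 := by
      have h1 : ((Pfin.card : ℝ)) ^ 2 = ((Pfin.card : ℝ) * c) ^ 2 := by
        rw [mul_pow, sq c, hcc, mul_one]
      rw [h1, ← hdetc, hdetAB]
      rcases hBunit with h | h <;> rw [h] <;> norm_num
    have hcard1 : Pfin.card = 1 := by
      have h2 : (Pfin.card : ℝ) = 1 := by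
        nlinarith [hsq, Nat.cast_nonneg (α := ℝ) Pfin.card]
      exact_mod_cast h2
    omega
  · -- perfect matching → integral inverse
    intro h1
    -- the unique neighbor map
    have hnb : ∀ v : Fin n, ∃! w, S.Adj v w := by
      intro v
      have h2 := h1 v
      rw [sachsDeg] at h2
      obtain ⟨hsub, hne⟩ := Nat.card_eq_one_iff_unique.1 h2
      obtain ⟨⟨w, hw⟩⟩ := hne
      exact ⟨w, hw, fun y hy =>
        congrArg Subtype.val (hsub.elim (⟨y, hy⟩ : {w // S.Adj v w}) ⟨w, hw⟩)⟩
    set f : Fin n → Fin n := fun v => (hnb v).choose with hf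
    have hfadj : ∀ v, S.Adj v (f v) := fun v => (hnb v).choose_spec.1
    have hfuniq : ∀ v w, S.Adj v w → w = f v := fun v w hw => ((hnb v).choose_spec.2 w hw)
    have hinvol : Function.Involutive f := fun v => ((hfuniq (f v) v (hfadj v).symm)).symm
    set π₀ : Equiv.Perm (Fin n) := hinvol.toPerm with hπ₀def
    have hπ₀app : ∀ v, π₀ v = f v := fun v => rfl
    have hπ₀G : ∀ i, G.Adj i (π₀ i) := fun i => hS.1 (hfadj i)
    have hπ₀P : π₀ ∈ Pfin := (memP π₀).2 hπ₀G
    -- Pfin = {π₀}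
    have hPsing : Pfin = {π₀} := by
      apply Finset.eq_singleton_iff_unique_mem.2
      refine ⟨hπ₀P, fun π hπ => ?_⟩
      apply Equiv.ext
      intro i
      have h2 : S.Adj i (π i) := (key π ((memP π).1 hπ) i (π i)).2 (Or.inl rfl)
      rw [hπ₀app]
      exact (hfuniq i (π i) h2)
    -- det A = ±1
    have hprod1 : ∏ i, σ (π₀ i) i = 1 := by
      apply Finset.prod_involution (g := fun a _ => π₀ a)
      · intro a _
        have h4 : π₀ (π₀ a) = a := hinvol a
        rw [h4, hσsymm a (π₀ a)]
        rcases hσval (π₀ a) a (hπ₀G a).symm with h | h <;> rw [h] <;> norm_num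
      · intro a _ _
        exact fun hc => (hfadj a).ne' (by rw [← hπ₀app, hc])
      · intro a _; exact Finset.mem_univ _
      · intro a _
        exact hinvol a
    have hdetval : A.det = ((Equiv.Perm.sign π₀ : ℤ) : ℝ) := by
      rw [hdet, hPsing, Finset.sum_singleton, hprod1, mul_one]
    -- conclude integrality
    intro i j
    have hadjugate : A.adjugate = (B.adjugate).map (Int.cast : ℤ → ℝ) := by
      rw [hAB]
      have h := (Int.castRingHom ℝ).map_adjugate B
      simpa [RingHom.mapMatrix_apply] using h.symm
    rcases Int.units_eq_one_or (Equiv.Perm.sign π₀) with h | h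
    · refine ⟨B.adjugate i j, ?_⟩
      rw [Matrix.inv_def, hdetval, h]
      simp [hadjugate]
    · refine ⟨-B.adjugate i j, ?_⟩
      rw [Matrix.inv_def, hdetval, h]
      have : Ring.inverse ((((-1 : ℤˣ) : ℤ)) : ℝ) = -1 := by
        norm_num [Ring.inverse_eq_inv']
      rw [this]
      simp [hadjugate]
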